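/- Let r ∈ {5, 6}, let k ≥ 0 be an integer, and let L = (a, b) ∈ ℤ × (Fin r → ℤ). Then ⟨L, ξ⟩ ≥ k for every exceptional class ξ ∈ E_r if and only if: b_i ≥ k for all i; a ≥ b_i + b_j + k for all distinct i ≠ j; and 2a ≥ ∑_{i∈T} b_i + k for every 5-element subset T of Fin r. -/
import Mathlib

/-- The intersection pairing on `Λ_r = ℤ × (Fin r → ℤ)`:
`⟨(a,b),(d,m)⟩ = a·d - ∑ bᵢ·mᵢ`. -/
def pairing {r : ℕ} (L ξ : ℤ × (Fin r → ℤ)) : ℤ :=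
  L.1 * ξ.1 - ∑ i, L.2 i * ξ.2 i

/-- A class `(d, m)` in `Λ_r` is exceptional if `d² - ∑ mᵢ² = -1` and
`3d - ∑ mᵢ = 1`. -/
def IsExc {r : ℕ} (p : ℤ × (Fin r → ℤ)) : Prop :=
  p.1 ^ 2 - ∑ i, (p.2 i) ^ 2 = -1 ∧ 3 * p.1 - ∑ i, p.2 i = 1

lemma aux_zero_one {r : ℕ} (m : Fin r → ℤ) (h : ∑ i, (m i) ^ 2 = ∑ i, m i) :
    ∀ i, m i = 0 ∨ m i = 1 := by
  have h0 : ∑ i, ((m i) ^ 2 - m i) = 0 := by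
    rw [Finset.sum_sub_distrib, h, sub_self]
  have hnn : ∀ i ∈ Finset.univ, (0:ℤ) ≤ (m i) ^ 2 - m i := by
    intro i _
    rcases le_or_gt (m i) 0 with h1 | h1 <;> nlinarith
  intro i
  have h2 := (Finset.sum_eq_zero_iff_of_nonneg hnn).mp h0 i (Finset.mem_univ i)
  have h3 : m i * (m i - 1) = 0 := by nlinarith
  rcases mul_eq_zero.mp h3 with h | h
  · exact Or.inl h
  · exact Or.inr (by linarith)

lemma aux_indicator {r : ℕ} (m : Fin r → ℤ) (h01 : ∀ i, m i = 0 ∨ m i = 1) :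
    ∃ T : Finset (Fin r), (T.card : ℤ) = ∑ i, m i ∧
      ∀ b : Fin r → ℤ, ∑ i, b i * m i = ∑ i ∈ T, b i := by
  refine ⟨Finset.univ.filter (fun i => m i = 1), ?_, ?_⟩
  · rw [Finset.card_filter]
    push_cast
    refine Finset.sum_congr rfl fun i _ => ?_
    rcases h01 i with h | h <;> simp [h]
  · intro b
    rw [← Finset.sum_filter_of_ne (p := fun i => m i = 1)
      (f := fun i => b i * m i)]
    · refine Finset.sum_congr rfl fun i hi => ?_
      simp only [Finset.mem_filter] at hi
      rw [hi.2, mul_one]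
    · intro i _ hne
      rcases h01 i with h | h
      · exact absurd (by simp [h]) hne
      · exact h

lemma aux_ind_sums {r : ℕ} (s : Finset (Fin r)) (c : ℤ) (b : Fin r → ℤ) :
    (∑ i, (if i ∈ s then c else 0) = c * s.card) ∧
    (∑ i, (if i ∈ s then c else (0:ℤ)) ^ 2 = c ^ 2 * s.card) ∧
    (∑ i, b i * (if i ∈ s then c else 0) = c * ∑ i ∈ s, b i) := by
  refine ⟨?_, ?_, ?_⟩
  · rw [Finset.sum_ite_mem, Finset.univ_inter, Finset.sum_const, nsmul_eq_mul, mul_comm]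
  · have : ∀ i, (if i ∈ s then c else (0:ℤ)) ^ 2 = if i ∈ s then c ^ 2 else 0 := by
      intro i; split <;> ring
    simp_rw [this]
    rw [Finset.sum_ite_mem, Finset.univ_inter, Finset.sum_const, nsmul_eq_mul, mul_comm]
  · simp_rw [mul_ite, mul_zero]
    rw [Finset.sum_ite_mem, Finset.univ_inter, Finset.mul_sum]
    exact Finset.sum_congr rfl fun i _ => mul_comm _ _

theorem k_very_ample_criterion_r56 (r : ℕ) (hr : r = 5 ∨ r = 6)
    (k : ℤ) (hk : 0 ≤ k) (a : ℤ) (b : Fin r → ℤ) :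
    (∀ ξ : ℤ × (Fin r → ℤ), IsExc ξ → k ≤ pairing (a, b) ξ) ↔
      ((∀ i, k ≤ b i) ∧
       (∀ i j, i ≠ j → b i + b j + k ≤ a) ∧
       (∀ T : Finset (Fin r), T.card = 5 → (∑ i ∈ T, b i) + k ≤ 2 * a)) := by
  have hr6 : r ≤ 6 := by rcases hr with h | h <;> omega
  constructor
  · intro H
    refine ⟨?_, ?_, ?_⟩
    · intro i
      have h := aux_ind_sums ({i} : Finset (Fin r)) (-1) b
      have hcard : (({i} : Finset (Fin r)).card : ℤ) = 1 := by simp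
      have hE : IsExc ((0 : ℤ), fun j => if j ∈ ({i} : Finset (Fin r)) then (-1:ℤ) else 0) := by
        refine ⟨?_, ?_⟩
        · show (0:ℤ)^2 - _ = -1
          rw [h.2.1, hcard]; ring
        · show 3 * (0:ℤ) - _ = 1
          rw [h.1, hcard]; ring
      have hp := H _ hE
      rw [pairing] at hp
      simp only at hp
      rw [h.2.2] at hp
      simp at hp
      linarith
    · intro i j hij
      have h := aux_ind_sums ({i, j} : Finset (Fin r)) 1 b
      have hcard : ((({i, j} : Finset (Fin r)).card : ℤ)) = 2 := by
        rw [Finset.card_pair hij]; norm_num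
      have hE : IsExc ((1 : ℤ), fun l => if l ∈ ({i, j} : Finset (Fin r)) then (1:ℤ) else 0) := by
        refine ⟨?_, ?_⟩
        · show (1:ℤ)^2 - _ = -1
          rw [h.2.1, hcard]; ring
        · show 3 * (1:ℤ) - _ = 1
          rw [h.1, hcard]; ring
      have hp := H _ hE
      rw [pairing] at hp
      simp only at hp
      rw [h.2.2] at hp
      rw [Finset.sum_pair hij] at hp
      linarith
    · intro T hT
      have h := aux_ind_sums T 1 b
      have hcard : ((T.card : ℤ)) = 5 := by rw [hT]; norm_num
      have hE : IsExc ((2 : ℤ), fun l => if l ∈ T then (1:ℤ) else 0) := by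
        refine ⟨?_, ?_⟩
        · show (2:ℤ)^2 - _ = -1
          rw [h.2.1, hcard]; ring
        · show 3 * (2:ℤ) - _ = 1
          rw [h.1, hcard]; ring
      have hp := H _ hE
      rw [pairing] at hp
      simp only at hp
      rw [h.2.2] at hp
      linarith
  · rintro ⟨h1, h2, h3⟩ ⟨d, m⟩ ⟨hE1, hE2⟩
    simp only at hE1 hE2
    have hm2 : ∑ i, (m i) ^ 2 = d ^ 2 + 1 := by linarith
    have hm1 : ∑ i, m i = 3 * d - 1 := by linarith
    -- Cauchy–Schwarz bound on d
    have hcs := sq_sum_le_card_mul_sum_sq (s := (Finset.univ : Finset (Fin r))) (f := m)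
    rw [hm1, hm2, Finset.card_univ, Fintype.card_fin] at hcs
    have hsq : (0:ℤ) ≤ d ^ 2 + 1 := by positivity
    have hcs' : (3 * d - 1) ^ 2 ≤ 6 * (d ^ 2 + 1) := by
      calc (3 * d - 1) ^ 2 ≤ (r : ℤ) * (d ^ 2 + 1) := hcs
        _ ≤ 6 * (d ^ 2 + 1) := by
          apply mul_le_mul_of_nonneg_right _ hsq
          exact_mod_cast hr6
    have hd0 : 0 ≤ d := by nlinarith
    have hd2 : d ≤ 2 := by nlinarith
    rw [pairing]
    simp only
    interval_cases d
    · -- d = 0 : m = -indicator of singleton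
      set n : Fin r → ℤ := fun i => -m i with hn
      have hn1 : ∑ i, n i = 1 := by
        simp only [hn]
        rw [Finset.sum_neg_distrib]
        omega
      have hn2 : ∑ i, (n i) ^ 2 = 1 := by
        have : ∀ i, (n i) ^ 2 = (m i) ^ 2 := fun i => by simp [hn]
        rw [Finset.sum_congr rfl fun i _ => this i]
        omega
      obtain ⟨T, hTc, hTs⟩ := aux_indicator n (aux_zero_one n (by rw [hn1, hn2]))
      have hTcard : T.card = 1 := by omega
      obtain ⟨i, hi⟩ := Finset.card_eq_one.mp hTcard
      have hbm : ∑ i, b i * m i = -(∑ i ∈ T, b i) := by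
        rw [← hTs b]
        rw [← Finset.sum_neg_distrib]
        refine Finset.sum_congr rfl fun i _ => ?_
        simp [hn]
      rw [hbm, hi, Finset.sum_singleton]
      have := h1 i
      linarith
    · -- d = 1 : m = indicator of pair
      obtain ⟨T, hTc, hTs⟩ := aux_indicator m (aux_zero_one m (by omega))
      have hTcard : T.card = 2 := by omega
      obtain ⟨i, j, hij, hT⟩ := Finset.card_eq_two.mp hTcard
      rw [hTs b, hT, Finset.sum_pair hij]
      have := h2 i j hij
      linarith
    · -- d = 2 : m = indicator of 5-set
      obtain ⟨T, hTc, hTs⟩ := aux_indicator m (aux_zero_one m (by omega))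
      have hTcard : T.card = 5 := by omega
      rw [hTs b]
      have := h3 T hTcard
      linarith
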